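/- Let (a_m)_{m=-ℓ..ℓ} be independent complex Gaussians with a_{-m} = (-1)^m a_m*, E|a_m|² = C_{ℓ,m} (with C_{ℓ,m}=C_{ℓ,-m}), a_0 real. Suppose all the power is in the m = 0 mode: C_{ℓ,m} = 0 for m ≠ 0 and C_{ℓ,0} = (2ℓ+1)C_ℓ. Then the observed power C^ℓ = (1/(2ℓ+1)) Σ_m |a_m|² is distributed as C_ℓ times a χ² random variable with 1 degree of freedom, and its variance equals 2(2ℓ+1) C_ℓ², i.e. A_ℓ = 2ℓ+1 times the isotropic Gaussian cosmic variance. -/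

import Mathlib

open MeasureTheory ProbabilityTheory Finset

/-- The chi-squared distribution with one degree of freedom: the law of the square
of a standard real Gaussian. -/
noncomputable def chiSqOne : Measure ℝ :=
  (ProbabilityTheory.gaussianReal 0 1).map (fun t : ℝ => t ^ 2)

section zonalAux
open Real
open scoped ENNReal NNReal

lemma pdf_std (x : ℝ) :
    gaussianPDFReal 0 1 x = (Real.sqrt (2 * π))⁻¹ * Real.exp (-(1/2) * x ^ 2) := by
  simp only [gaussianPDFReal, NNReal.coe_one, mul_one, sub_zero]
  ring_nf

lemma integral_std (g : ℝ → ℝ) :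
    ∫ x, g x ∂(gaussianReal 0 1) = ∫ x, gaussianPDFReal 0 1 x * g x := by
  rw [gaussianReal_of_var_ne_zero 0 one_ne_zero]
  have hf : Measurable fun x => (gaussianPDFReal 0 1 x).toNNReal :=
    (measurable_gaussianPDFReal 0 1).real_toNNReal
  have hpdf : gaussianPDF 0 1 = fun x => (((gaussianPDFReal 0 1 x).toNNReal : ℝ≥0) : ℝ≥0∞) := rfl
  rw [hpdf, integral_withDensity_eq_integral_smul hf]
  congr 1
  funext x
  rw [NNReal.smul_def, Real.coe_toNNReal _ (gaussianPDFReal_nonneg 0 1 x)]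
  rfl

lemma integrable_pow_std (k : ℕ) :
    Integrable (fun x : ℝ => x ^ k) (gaussianReal 0 1) := by
  rw [gaussianReal_of_var_ne_zero 0 one_ne_zero]
  rw [integrable_withDensity_iff (measurable_gaussianPDF 0 1)
    (Filter.Eventually.of_forall fun x => ENNReal.ofReal_lt_top)]
  have h := (integrable_rpow_mul_exp_neg_mul_sq (b := 1/2) one_half_pos
    (s := (k : ℝ)) (lt_of_lt_of_le neg_one_lt_zero (Nat.cast_nonneg k))).const_mul
    ((Real.sqrt (2 * π))⁻¹)
  refine h.congr (Filter.Eventually.of_forall fun x => ?_)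
  simp only [Real.rpow_natCast]
  rw [show gaussianPDF 0 1 x = ENNReal.ofReal (gaussianPDFReal 0 1 x) from rfl,
    ENNReal.toReal_ofReal (gaussianPDFReal_nonneg 0 1 x), pdf_std]
  ring

lemma moment_std (k : ℕ) (hk : Even k) :
    ∫ x, x ^ k ∂(gaussianReal 0 1)
      = (Real.sqrt (2 * π))⁻¹ *
        (2 * ((1/2 : ℝ) ^ (-((k : ℝ) + 1) / 2) * (1/2) * Real.Gamma (((k : ℝ) + 1) / 2))) := by
  rw [integral_std]
  have h1 : ∫ x, gaussianPDFReal 0 1 x * x ^ k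
      = (Real.sqrt (2 * π))⁻¹ * ∫ x : ℝ, x ^ k * Real.exp (-(1/2) * x ^ 2) := by
    rw [← integral_const_mul]
    congr 1; funext x; rw [pdf_std]; ring
  rw [h1]
  congr 1
  have h2 : ∫ x : ℝ, x ^ k * Real.exp (-(1/2) * x ^ 2)
      = 2 * ∫ x in Set.Ioi (0:ℝ), x ^ k * Real.exp (-(1/2) * x ^ 2) := by
    rw [← integral_comp_abs (f := fun x => x ^ k * Real.exp (-(1/2) * x ^ 2))]
    refine integral_congr_ae (Filter.Eventually.of_forall fun x => ?_)
    simp only [hk.pow_abs, sq_abs]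
  rw [h2]
  congr 1
  rw [← integral_rpow_mul_exp_neg_mul_rpow two_pos (q := (k : ℝ))
    (lt_of_lt_of_le neg_one_lt_zero (Nat.cast_nonneg k)) one_half_pos]
  refine setIntegral_congr_fun measurableSet_Ioi fun x hx => ?_
  rw [show ((2:ℝ)) = ((2:ℕ) : ℝ) by norm_num, Real.rpow_natCast, Real.rpow_natCast]

lemma rpow_half_aux (a : ℝ) : (1/2 : ℝ) ^ (-(a + 1) / 2) = (2:ℝ) ^ ((a+1)/2) := by
  rw [one_div, Real.inv_rpow two_pos.le, ← Real.rpow_neg two_pos.le, neg_div, neg_neg]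

lemma moment2_std : ∫ x, x ^ 2 ∂(gaussianReal 0 1) = 1 := by
  rw [moment_std 2 (by decide), rpow_half_aux]
  have hg : Real.Gamma ((((2:ℕ):ℝ) + 1) / 2) = (1/2) * Real.sqrt π := by
    rw [show ((((2:ℕ):ℝ)) + 1) / 2 = 1/2 + 1 by norm_num,
      Real.Gamma_add_one (by norm_num), Real.Gamma_one_half_eq]
  rw [hg, show ((((2:ℕ):ℝ)) + 1) / 2 = 1 + 1/2 by norm_num,
    Real.rpow_add two_pos, Real.rpow_one, ← Real.sqrt_eq_rpow,
    Real.sqrt_mul two_pos.le]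
  have h2 : Real.sqrt 2 > 0 := Real.sqrt_pos.mpr two_pos
  have hp : Real.sqrt π > 0 := Real.sqrt_pos.mpr Real.pi_pos
  field_simp

lemma moment4_std : ∫ x, x ^ 4 ∂(gaussianReal 0 1) = 3 := by
  rw [moment_std 4 (by decide), rpow_half_aux]
  have hg : Real.Gamma ((((4:ℕ):ℝ) + 1) / 2) = (3/4) * Real.sqrt π := by
    rw [show ((((4:ℕ):ℝ)) + 1) / 2 = (1/2 + 1) + 1 by norm_num,
      Real.Gamma_add_one (by norm_num), Real.Gamma_add_one (by norm_num),
      Real.Gamma_one_half_eq]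
    ring
  rw [hg, show ((((4:ℕ):ℝ)) + 1) / 2 = 2 + 1/2 by norm_num,
    Real.rpow_add two_pos, ← Real.sqrt_eq_rpow,
    show (2:ℝ) ^ (2:ℝ) = 4 by
      rw [show (2:ℝ) ^ (2:ℝ) = (2:ℝ) ^ ((2:ℕ):ℝ) by norm_num, Real.rpow_natCast]; norm_num,
    Real.sqrt_mul two_pos.le]
  have h2 : Real.sqrt 2 > 0 := Real.sqrt_pos.mpr two_pos
  have hp : Real.sqrt π > 0 := Real.sqrt_pos.mpr Real.pi_pos
  field_simp

end zonalAux

/-- Zonal power concentration: if all the power on multipole `ℓ` is in the `m = 0`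
mode, with `a^ℓ_0` real Gaussian of variance `C_{ℓ,0} = (2ℓ+1)C_ℓ` and `a^ℓ_m = 0`
for `m ≠ 0`, then the observed power `C^ℓ = (1/(2ℓ+1)) Σ_m |a^ℓ_m|²` is `C_ℓ`
times a `χ²₁` variable, and its variance is `2ℓ+1` times the isotropic Gaussian
cosmic variance `2C_ℓ²/(2ℓ+1)`. -/
theorem zonal_power_chiSqOne {Ω : Type*} [MeasurableSpace Ω]
    (μ : Measure Ω) [IsProbabilityMeasure μ] (ℓ : ℕ) (Cl : NNReal) (hCl : 0 < Cl)
    (a0 : Ω → ℝ) (ha0 : μ.map a0 = gaussianReal 0 ((2 * ℓ + 1) * Cl))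
    (a : ℤ → Ω → ℂ)
    (haz : ∀ ω, a 0 ω = (a0 ω : ℂ))
    (hzero : ∀ m ∈ Finset.Icc (-(ℓ : ℤ)) ℓ, m ≠ 0 → ∀ ω, a m ω = 0)
    (Cobs : Ω → ℝ)
    (hCobs : ∀ ω, Cobs ω
      = (1 / (2 * (ℓ : ℝ) + 1)) * ∑ m ∈ Finset.Icc (-(ℓ : ℤ)) ℓ, ‖a m ω‖ ^ 2) :
    μ.map (fun ω => Cobs ω / (Cl : ℝ)) = chiSqOne ∧
    ProbabilityTheory.variance Cobs μ = (2 * (ℓ : ℝ) + 1) * (2 * (Cl : ℝ) ^ 2 / (2 * (ℓ : ℝ) + 1)) := by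
  have hn : (0:ℝ) < 2 * (ℓ:ℝ) + 1 := by positivity
  have hClR : (0:ℝ) < (Cl:ℝ) := hCl
  set v : NNReal := (2 * (ℓ:NNReal) + 1) * Cl with hv_def
  have hvR : (v : ℝ) = (2*(ℓ:ℝ)+1) * (Cl:ℝ) := by push_cast [hv_def]; ring
  have hvpos : 0 < (v:ℝ) := by rw [hvR]; positivity
  set c : ℝ := (Real.sqrt (v:ℝ))⁻¹ with hc_def
  have hc2 : c ^ 2 = ((v:ℝ))⁻¹ := by
    rw [hc_def, inv_pow, Real.sq_sqrt hvpos.le]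
  have ha0m : AEMeasurable a0 μ := by
    refine aemeasurable_of_map_neZero ?_
    rw [ha0]; infer_instance
  set Z : Ω → ℝ := fun ω => c * a0 ω with hZ_def
  have hZm : AEMeasurable Z μ := ha0m.const_mul c
  have hZmap : μ.map Z = gaussianReal 0 1 := by
    calc μ.map Z = (μ.map a0).map (c * ·) :=
          (AEMeasurable.map_map_of_aemeasurable
            ((measurable_const_mul c).aemeasurable) ha0m).symm
    _ = gaussianReal (c * 0) (NNReal.mk (c^2) (sq_nonneg c) * v) := by
          rw [ha0, gaussianReal_map_const_mul]
    _ = gaussianReal 0 1 := by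
          rw [mul_zero]
          congr 1
          apply NNReal.coe_injective
          push_cast
          rw [hc2, inv_mul_cancel₀ hvpos.ne']
  have h0mem : (0:ℤ) ∈ Finset.Icc (-(ℓ:ℤ)) (ℓ:ℤ) :=
    Finset.mem_Icc.mpr ⟨neg_nonpos.mpr (Int.natCast_nonneg ℓ), Int.natCast_nonneg ℓ⟩
  have hC : ∀ ω, Cobs ω = (Cl:ℝ) * (Z ω) ^ 2 := by
    intro ω
    rw [hCobs ω]
    have hsum : ∑ m ∈ Finset.Icc (-(ℓ:ℤ)) (ℓ:ℤ), ‖a m ω‖ ^ 2 = a0 ω ^ 2 := by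
      rw [Finset.sum_eq_single_of_mem 0 h0mem
        (fun m hm hne => by rw [hzero m hm hne ω]; simp)]
      rw [haz ω, Complex.norm_real, Real.norm_eq_abs, sq_abs]
    rw [hsum, hZ_def]
    simp only [mul_pow, hc2, hvR]
    field_simp
  have part1fun : (fun ω => Cobs ω / (Cl:ℝ)) = fun ω => Z ω ^ 2 := by
    funext ω
    rw [hC ω, mul_div_cancel_left₀ _ hClR.ne']
  have hsq : Measurable fun t : ℝ => t ^ 2 := measurable_id.pow_const 2
  have hs4 : Measurable fun t : ℝ => t ^ 4 := measurable_id.pow_const 4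
  have hmap : μ.map (fun ω => Z ω ^ 2) = chiSqOne := by
    have h1 : (fun ω => Z ω ^ 2) = (fun t : ℝ => t ^ 2) ∘ Z := rfl
    rw [h1, ← AEMeasurable.map_map_of_aemeasurable hsq.aemeasurable hZm, hZmap]
    rfl
  constructor
  · rw [part1fun]; exact hmap
  · have hmem : MemLp (fun ω => Z ω ^ 2) 2 μ := by
      have h1 : MemLp (fun x : ℝ => x ^ 2) 2 (gaussianReal 0 1) := by
        rw [memLp_two_iff_integrable_sq hsq.aestronglyMeasurable]
        have h4 := integrable_pow_std 4
        refine h4.congr (Filter.Eventually.of_forall fun x => ?_)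
        ring
      exact (memLp_map_measure_iff hsq.aestronglyMeasurable hZm).mp
        (by rw [hZmap]; exact h1)
    have hI4 : ∫ ω, Z ω ^ 4 ∂μ = 3 := by
      have h := integral_map (f := fun x : ℝ => x ^ 4) hZm hs4.aestronglyMeasurable
      rw [hZmap, moment4_std] at h
      simpa using h.symm
    have hI2 : ∫ ω, Z ω ^ 2 ∂μ = 1 := by
      have h := integral_map (f := fun x : ℝ => x ^ 2) hZm hsq.aestronglyMeasurable
      rw [hZmap, moment2_std] at h
      simpa using h.symm
    have hvar2 : variance (fun ω => Z ω ^ 2) μ = 2 := by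
      rw [variance_eq_sub hmem]
      have hA : μ[(fun ω => Z ω ^ 2) ^ 2] = 3 := by
        rw [← hI4]
        exact integral_congr_ae (Filter.Eventually.of_forall fun ω => by
          simp only [Pi.pow_apply]; ring)
      have hB : μ[fun ω => Z ω ^ 2] = 1 := hI2
      rw [hA, hB]
      norm_num
    have hCeq : Cobs = fun ω => (Cl:ℝ) * (Z ω ^ 2) := funext hC
    rw [hCeq, variance_const_mul, hvar2]
    field_simp
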